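/- Let (S_n)_{n≥0} be a square integrable martingale with S_0 = 0 whose increments satisfy |S_k - S_{k-1}| ≤ c for all k ≤ n, and let ⟨S⟩_n = Σ_{i=1}^n E[(S_i - S_{i-1})² | F_{i-1}]. Then for all x > 0 and y > 0, P(S_n ≥ x and ⟨S⟩_n ≤ y) ≤ exp(-x²/(2(y + cx))). -/

import Mathlib

open MeasureTheory Finset

lemma exp_sub_self_le (v : ℝ) : Real.exp v - v ≤ Real.exp |v| - |v| := by
  rcases le_or_gt 0 v with h | h
  · rw [abs_of_nonneg h]
  · rw [abs_of_neg h]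
    have hs : Real.sinh v < v := Real.sinh_lt_self_iff.2 h
    rw [Real.sinh_eq] at hs
    nlinarith [hs]

lemma exp_le_quad {w : ℝ} (h0 : 0 ≤ w) (h1 : w < 1) :
    Real.exp w ≤ 1 + w + w ^ 2 / (2 * (1 - w)) := by
  have hb := Real.exp_bound' h0 h1.le (n := 3) (by norm_num)
  have heq : (∑ m ∈ Finset.range 3, w ^ m / (Nat.factorial m : ℝ))
      + w ^ 3 * ((3 : ℕ) + 1) / ((Nat.factorial 3 : ℝ) * (3 : ℕ))
      = 1 + w + w ^ 2 / 2 + w ^ 3 * (2 / 9) := by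
    simp [Finset.sum_range_succ, Nat.factorial]
    ring
  rw [heq] at hb
  have h1w : 0 < 1 - w := by linarith
  have : w ^ 2 / 2 + w ^ 3 * (2 / 9) ≤ w ^ 2 / (2 * (1 - w)) := by
    rw [le_div_iff₀ (by positivity)]
    nlinarith [pow_nonneg h0 3, pow_nonneg h0 4]
  linarith

lemma exp_le_one_add_add {v mm : ℝ} (hm : mm < 1) (hv : |v| ≤ mm) :
    Real.exp v ≤ 1 + v + v ^ 2 / (2 * (1 - mm)) := by
  have h1 := exp_sub_self_le v
  have h2 := exp_le_quad (abs_nonneg v) (lt_of_le_of_lt hv hm)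
  have hvm : |v| < 1 := lt_of_le_of_lt hv hm
  have h3 : |v| ^ 2 / (2 * (1 - |v|)) ≤ v ^ 2 / (2 * (1 - mm)) := by
    rw [sq_abs]
    exact div_le_div_of_nonneg_left (sq_nonneg v) (by linarith) (by linarith)
  linarith

theorem freedman_aux {Ω : Type*} {m : MeasurableSpace Ω} {μ : Measure Ω} [IsProbabilityMeasure μ]
    (F : Filtration ℕ m) (S : ℕ → Ω → ℝ) (hmart : Martingale S F μ) (h0 : S 0 = 0)
    (n : ℕ) (c : ℝ) (hc : 0 < c)
    (hincr : ∀ᵐ ω ∂μ, ∀ i, i < n → |S (i + 1) ω - S i ω| ≤ c)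
    (l a : ℝ) (hl : 0 < l) (hlc : l * c < 1) (ha : a = l ^ 2 / (2 * (1 - l * c))) :
    ∀ k, k ≤ n →
      Integrable (fun ω => Real.exp (l * S k ω -
        a * ∑ i ∈ range k, (μ[fun ω' => (S (i + 1) ω' - S i ω') ^ 2 | F i]) ω)) μ ∧
      ∫ ω, Real.exp (l * S k ω -
        a * ∑ i ∈ range k, (μ[fun ω' => (S (i + 1) ω' - S i ω') ^ 2 | F i]) ω) ∂μ ≤ 1 := by
  have h1lc : 0 < 1 - l * c := by linarith
  have ha0 : 0 < a := by rw [ha]; positivity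
  set D : ℕ → Ω → ℝ := fun i ω => S (i + 1) ω - S i ω with hD_def
  set G : ℕ → Ω → ℝ := fun i => μ[fun ω' => (S (i + 1) ω' - S i ω') ^ 2 | F i] with hG_def
  set Q : ℕ → Ω → ℝ := fun k ω => ∑ i ∈ range k, G i ω with hQ_def
  set M : ℕ → Ω → ℝ := fun k ω => Real.exp (l * S k ω - a * Q k ω) with hM_def
  -- measurability
  have hSm : ∀ k, StronglyMeasurable[m] (S k) := fun k => (hmart.stronglyAdapted k).mono (F.le k)
  have hDm : ∀ i, StronglyMeasurable[m] (D i) := fun i => (hSm (i + 1)).sub (hSm i)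
  have hGm : ∀ i, StronglyMeasurable[m] (G i) := fun i =>
    stronglyMeasurable_condExp.mono (F.le i)
  have hQm : ∀ k, StronglyMeasurable[m] (Q k) := fun k =>
    Finset.stronglyMeasurable_fun_sum _ fun i _ => hGm i
  have hMm : ∀ k, StronglyMeasurable[m] (M k) := fun k =>
    Real.continuous_exp.comp_stronglyMeasurable
      (((hSm k).const_mul l).sub ((hQm k).const_mul a))
  -- a.e. bounds
  have hSb : ∀ᵐ ω ∂μ, ∀ k, k ≤ n → |S k ω| ≤ c * k := by
    filter_upwards [hincr] with ω hω
    intro k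
    induction k with
    | zero => intro _; simp [h0]
    | succ k ih =>
      intro hk
      have h1 := hω k (by omega)
      have h2 := ih (by omega)
      have h3 : |S (k + 1) ω| ≤ |S k ω| + |S (k + 1) ω - S k ω| := by
        have := abs_add_le (S k ω) (S (k + 1) ω - S k ω)
        simpa using this
      push_cast
      linarith
  have hG0 : ∀ᵐ ω ∂μ, ∀ i, 0 ≤ G i ω := by
    rw [MeasureTheory.ae_all_iff]
    intro i
    exact condExp_nonneg (Filter.Eventually.of_forall fun ω => sq_nonneg _)
  have hQ0 : ∀ᵐ ω ∂μ, ∀ k, 0 ≤ Q k ω := by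
    filter_upwards [hG0] with ω hω k
    exact Finset.sum_nonneg fun i _ => hω i
  -- integrability
  have hDint : ∀ i, Integrable (D i) μ :=
    fun i => (hmart.integrable (i + 1)).sub (hmart.integrable i)
  have hD2int : ∀ i, i < n → Integrable (fun ω => (D i ω) ^ 2) μ := by
    intro i hi
    refine Integrable.mono' (integrable_const (c ^ 2))
      ((continuous_pow 2).comp_stronglyMeasurable (hDm i)).aestronglyMeasurable ?_
    filter_upwards [hincr] with ω hω
    have hd := hω i hi
    have hd' : |D i ω| ≤ c := hd
    rw [Real.norm_eq_abs, abs_pow]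
    nlinarith [abs_nonneg (D i ω)]
  have hExpInt : ∀ i, i < n → Integrable (fun ω => Real.exp (l * D i ω)) μ := by
    intro i hi
    refine Integrable.mono' (integrable_const (Real.exp (l * c)))
      (Real.continuous_exp.comp_stronglyMeasurable ((hDm i).const_mul l)).aestronglyMeasurable ?_
    filter_upwards [hincr] with ω hω
    have hd := hω i hi
    rw [Real.norm_eq_abs, abs_of_nonneg (Real.exp_nonneg _)]
    apply Real.exp_le_exp.2
    calc l * D i ω ≤ l * |D i ω| := by
          apply mul_le_mul_of_nonneg_left (le_abs_self _) hl.le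
    _ ≤ l * c := mul_le_mul_of_nonneg_left hd hl.le
  have hMint : ∀ k, k ≤ n → Integrable (M k) μ := by
    intro k hk
    refine Integrable.mono' (integrable_const (Real.exp (l * (c * k))))
      (hMm k).aestronglyMeasurable ?_
    filter_upwards [hSb, hQ0] with ω h1 h2
    rw [Real.norm_eq_abs, abs_of_nonneg (Real.exp_nonneg _)]
    apply Real.exp_le_exp.2
    have := h1 k hk
    have := h2 k
    nlinarith [abs_le.1 (h1 k hk)]
  -- martingale increments have zero conditional expectation
  have hDcond : ∀ i, μ[D i | F i] =ᵐ[μ] 0 := by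
    intro i
    have h1 : μ[D i | F i] =ᵐ[μ] μ[S (i + 1) | F i] - μ[S i | F i] :=
      condExp_sub (hmart.integrable (i + 1)) (hmart.integrable i) _
    have h2 : μ[S (i + 1) | F i] =ᵐ[μ] S i := hmart.2 i (i + 1) (by omega)
    have h3 : μ[S i | F i] = S i :=
      condExp_of_stronglyMeasurable (F.le i) (hmart.stronglyAdapted i) (hmart.integrable i)
    filter_upwards [h1, h2] with ω e1 e2
    simp only [Pi.sub_apply, Pi.zero_apply] at *
    rw [e1, e2, h3]
    ring
  -- key conditional bound
  have hcond : ∀ i, i < n →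
      μ[fun ω => Real.exp (l * D i ω) | F i] ≤ᵐ[μ] fun ω => 1 + a * G i ω := by
    intro i hi
    have hptwise : (fun ω => Real.exp (l * D i ω)) ≤ᵐ[μ]
        (fun _ => (1 : ℝ)) + l • D i + a • fun ω => (D i ω) ^ 2 := by
      filter_upwards [hincr] with ω hω
      have hd : |D i ω| ≤ c := hω i hi
      have hv : |l * D i ω| ≤ l * c := by
        rw [abs_mul, abs_of_pos hl]
        exact mul_le_mul_of_nonneg_left hd hl.le
      have hb := exp_le_one_add_add hlc hv
      simp only [Pi.add_apply, Pi.smul_apply, smul_eq_mul]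
      calc Real.exp (l * D i ω) ≤ 1 + l * D i ω + (l * D i ω) ^ 2 / (2 * (1 - l * c)) := hb
      _ = 1 + l * D i ω + a * (D i ω) ^ 2 := by rw [ha]; ring
    have hint1 : Integrable ((fun _ => (1 : ℝ)) + l • D i) μ :=
      (integrable_const 1).add ((hDint i).smul l)
    have hint2 : Integrable ((fun _ => (1 : ℝ)) + l • D i + a • fun ω => (D i ω) ^ 2) μ :=
      hint1.add ((hD2int i hi).smul a)
    have hmono := condExp_mono (m := F i) (hExpInt i hi) hint2 hptwise
    have e1 : μ[(fun _ => (1 : ℝ)) + l • D i + (a • fun ω => (D i ω) ^ 2) | F i] =ᵐ[μ]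
        fun ω => 1 + a * G i ω := by
      have hadd := condExp_add (μ := μ) (m := F i) hint1 ((hD2int i hi).smul a)
      have hadd2 := condExp_add (μ := μ) (m := F i) (integrable_const (1 : ℝ)) ((hDint i).smul l)
      have hs1 := condExp_smul (μ := μ) (m := F i) l (D i)
      have hs2 := condExp_smul (μ := μ) (m := F i) a (fun ω => (D i ω) ^ 2)
      have hciconst : μ[(fun _ => (1 : ℝ)) | F i] = fun _ => (1 : ℝ) := condExp_const (F.le i) 1
      filter_upwards [hadd, hadd2, hs1, hs2, hDcond i] with ω k1 k2 k3 k4 k5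
      simp only [Pi.add_apply, Pi.smul_apply, smul_eq_mul, Pi.zero_apply] at *
      rw [k1, k2, k3, k4, hciconst, k5]
      simp [hG_def, hD_def]
    filter_upwards [hmono, e1] with ω h1 h2
    rw [← h2]
    exact h1
  -- one-step supermartingale inequality
  have hstep : ∀ k, k < n → ∫ ω, M (k + 1) ω ∂μ ≤ ∫ ω, M k ω ∂μ := by
    intro k hk
    set f : Ω → ℝ := fun ω => Real.exp (l * S k ω - a * Q (k + 1) ω) with hf_def
    set e : Ω → ℝ := fun ω => Real.exp (l * D k ω) with he_def
    have hfe : f * e = M (k + 1) := by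
      funext ω
      simp only [hf_def, he_def, hM_def, Pi.mul_apply, ← Real.exp_add]
      congr 1
      simp only [hD_def]
      ring
    have hfm : StronglyMeasurable[F k] f := by
      apply Real.continuous_exp.comp_stronglyMeasurable
      apply StronglyMeasurable.sub
      · exact (hmart.stronglyAdapted k).const_mul l
      · apply StronglyMeasurable.const_mul
        apply Finset.stronglyMeasurable_fun_sum
        intro i hi
        have : F i ≤ F k := F.mono (by
          simp only [Finset.mem_range] at hi; omega)
        exact stronglyMeasurable_condExp.mono this
    have hfeint : Integrable (f * e) μ := by rw [hfe]; exact hMint (k + 1) hk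
    have hpull : μ[f * e | F k] =ᵐ[μ] f * μ[e | F k] :=
      condExp_mul_of_stronglyMeasurable_left hfm hfeint (hExpInt k hk)
    have hle : μ[M (k + 1) | F k] ≤ᵐ[μ] M k := by
      have hMQ : ∀ᵐ ω ∂μ, (μ[M (k + 1) | F k]) ω ≤ M k ω := by
        have hpull' : μ[M (k + 1) | F k] =ᵐ[μ] f * μ[e | F k] := by
          rw [← hfe]; exact hpull
        filter_upwards [hpull', hcond k hk, hG0, hQ0] with ω h1 h2 h3 h4
        rw [h1]
        have hf0 : 0 ≤ f ω := Real.exp_nonneg _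
        have step1 : f ω * (μ[e | F k]) ω ≤ f ω * (1 + a * G k ω) :=
          mul_le_mul_of_nonneg_left h2 hf0
        have hQsucc : Q (k + 1) ω = Q k ω + G k ω := Finset.sum_range_succ _ _
        have step2 : f ω * (1 + a * G k ω) ≤ M k ω := by
          have ht : 0 ≤ a * G k ω := mul_nonneg ha0.le (h3 k)
          have hexp : (1 + a * G k ω) * Real.exp (-(a * G k ω)) ≤ 1 := by
            calc (1 + a * G k ω) * Real.exp (-(a * G k ω))
                ≤ Real.exp (a * G k ω) * Real.exp (-(a * G k ω)) := by
                  apply mul_le_mul_of_nonneg_right _ (Real.exp_nonneg _)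
                  linarith [Real.add_one_le_exp (a * G k ω)]
            _ = 1 := by rw [← Real.exp_add]; simp
          have hfM : f ω = M k ω * Real.exp (-(a * G k ω)) := by
            simp only [hf_def, hM_def, ← Real.exp_add, hQsucc]
            congr 1
            ring
          rw [hfM]
          calc M k ω * Real.exp (-(a * G k ω)) * (1 + a * G k ω)
              = M k ω * ((1 + a * G k ω) * Real.exp (-(a * G k ω))) := by ring
          _ ≤ M k ω * 1 := by
              apply mul_le_mul_of_nonneg_left hexp (Real.exp_nonneg _)
          _ = M k ω := mul_one _
        calc f ω * (μ[e | F k]) ω ≤ f ω * (1 + a * G k ω) := step1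
        _ ≤ M k ω := step2
      exact hMQ
    calc ∫ ω, M (k + 1) ω ∂μ = ∫ ω, (μ[M (k + 1) | F k]) ω ∂μ :=
          (integral_condExp (F.le k)).symm
    _ ≤ ∫ ω, M k ω ∂μ :=
          integral_mono_ae integrable_condExp (hMint k hk.le) hle
  -- induction
  intro k
  induction k with
  | zero =>
    intro hk
    refine ⟨hMint 0 hk, ?_⟩
    have hone : M 0 = fun _ => 1 := by
      funext ω
      simp [hM_def, hQ_def, h0]
    show ∫ ω, M 0 ω ∂μ ≤ 1
    rw [hone]
    simp
  | succ k ih =>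
    intro hk
    refine ⟨hMint (k + 1) hk, ?_⟩
    show ∫ ω, M (k + 1) ω ∂μ ≤ 1
    exact le_trans (hstep k hk) ((ih (by omega)).2)



theorem freedman_inequality
    {Ω : Type*} {m : MeasurableSpace Ω} {μ : Measure Ω} [IsProbabilityMeasure μ]
    (F : Filtration ℕ m) (S : ℕ → Ω → ℝ)
    (hmart : Martingale S F μ)
    (hL2 : ∀ n, MemLp (S n) 2 μ)
    (h0 : S 0 = 0)
    (n : ℕ) (c : ℝ) (hc : 0 < c)
    (hbdd : ∀ᵐ ω ∂μ, ∀ k ≤ n, 1 ≤ k → |S k ω - S (k - 1) ω| ≤ c)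
    (x y : ℝ) (hx : 0 < x) (hy : 0 < y) :
    μ {ω | x ≤ S n ω ∧
        ∑ i ∈ range n, (μ[fun ω' => (S (i + 1) ω' - S i ω') ^ 2 | F i]) ω ≤ y}
      ≤ ENNReal.ofReal (Real.exp (-x ^ 2 / (2 * (y + c * x)))) := by
  have hyc : 0 < y + c * x := by positivity
  set l : ℝ := x / (y + c * x) with hl_def
  have hl : 0 < l := by positivity
  have hlc : l * c < 1 := by
    rw [hl_def, div_mul_eq_mul_div, div_lt_one hyc]
    nlinarith
  have h1lcpos : 0 < 1 - l * c := by linarith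
  set a : ℝ := l ^ 2 / (2 * (1 - l * c)) with ha_def
  have ha0 : 0 < a := by positivity
  have h1lc : 1 - l * c = y / (y + c * x) := by
    rw [hl_def]
    field_simp
    ring
  have hkey : l * x - a * y = x ^ 2 / (2 * (y + c * x)) := by
    rw [ha_def, h1lc, hl_def]
    field_simp
    ring
  have hincr : ∀ᵐ ω ∂μ, ∀ i, i < n → |S (i + 1) ω - S i ω| ≤ c := by
    filter_upwards [hbdd] with ω hω i hi
    have := hω (i + 1) (by omega) (by omega)
    simpa using this
  obtain ⟨hMint, hMle⟩ :=
    freedman_aux F S hmart h0 n c hc hincr l a hl hlc ha_def n le_rfl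
  set Qn : Ω → ℝ :=
    fun ω => ∑ i ∈ range n, (μ[fun ω' => (S (i + 1) ω' - S i ω') ^ 2 | F i]) ω with hQn_def
  set M : Ω → ℝ := fun ω => Real.exp (l * S n ω - a * Qn ω) with hM_def
  set A : Set Ω := {ω | x ≤ S n ω ∧ Qn ω ≤ y} with hA_def
  set b : ℝ := Real.exp (l * x - a * y) with hb_def
  have hb0 : 0 < b := Real.exp_pos _
  have hSm : StronglyMeasurable[m] (S n) := (hmart.stronglyAdapted n).mono (F.le n)
  have hQm : StronglyMeasurable[m] Qn :=
    Finset.stronglyMeasurable_fun_sum _ fun i _ => stronglyMeasurable_condExp.mono (F.le i)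
  have hAmeas : MeasurableSet A := by
    have h1 : MeasurableSet {ω | x ≤ S n ω} :=
      measurableSet_le measurable_const hSm.measurable
    have h2 : MeasurableSet {ω | Qn ω ≤ y} :=
      measurableSet_le hQm.measurable measurable_const
    exact h1.inter h2
  have hptwise : ∀ ω, A.indicator (fun _ => b) ω ≤ M ω := by
    intro ω
    by_cases h : ω ∈ A
    · rw [Set.indicator_of_mem h]
      rcases h with ⟨h1, h2⟩
      apply Real.exp_le_exp.2
      nlinarith
    · rw [Set.indicator_of_notMem h]
      exact Real.exp_nonneg _
  have hIint : Integrable (A.indicator fun _ => b) μ :=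
    (integrable_const b).indicator hAmeas
  have h1 : (μ A).toReal * b ≤ 1 := by
    have hmono : ∫ ω, A.indicator (fun _ => b) ω ∂μ ≤ ∫ ω, M ω ∂μ :=
      integral_mono hIint hMint (fun ω => hptwise ω)
    have hind : ∫ ω, A.indicator (fun _ => b) ω ∂μ = (μ A).toReal * b := by
      rw [integral_indicator_const b hAmeas]
      simp [smul_eq_mul, measureReal_def]
    rw [hind] at hmono
    exact le_trans hmono hMle
  have h2 : (μ A).toReal ≤ Real.exp (-x ^ 2 / (2 * (y + c * x))) := by
    have : (μ A).toReal ≤ 1 / b := by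
      rw [le_div_iff₀ hb0]
      exact h1
    have hbeq : 1 / b = Real.exp (-x ^ 2 / (2 * (y + c * x))) := by
      rw [hb_def, one_div, ← Real.exp_neg, hkey, neg_div]
    exact this.trans_eq hbeq
  calc μ A = ENNReal.ofReal (μ A).toReal := (ENNReal.ofReal_toReal (measure_ne_top μ A)).symm
  _ ≤ ENNReal.ofReal (Real.exp (-x ^ 2 / (2 * (y + c * x)))) := ENNReal.ofReal_le_ofReal h2
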